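/- arXiv:1403.0505 — 6 statements merged into one kernel-verified Lean document; each statement's English description precedes it below -/
import Mathlib

section
/- For any nonnegative vectors p, q ∈ ℝ_+^n, the fidelity F(p,q) = (∑_i √(p_i q_i))² equals the optimal value of the semidefinite program: maximize ⟨X, √p √p^T⟩ subject to diag(X) = q and X positive semidefinite. -/
open Real Finset

lemma psd_entry_le (n : ℕ) (X : Matrix (Fin n) (Fin n) ℝ) (hX : X.PosSemidef)
    (i j : Fin n) : X i j ≤ Real.sqrt (X i i) * Real.sqrt (X j j) := by
  have hsym : X j i = X i j := by
    have h1 := hX.1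
    rw [Matrix.IsHermitian] at h1
    calc X j i = X.conjTranspose i j := by simp [Matrix.conjTranspose_apply]
    _ = X i j := by rw [h1]
  have key : ∀ s : ℝ, 0 ≤ X j j * (s * s) + (2 * X i j) * s + X i i := by
    intro s
    have h := hX.dotProduct_mulVec_nonneg (fun k => (if k = i then (1:ℝ) else 0) + s * (if k = j then 1 else 0))
    simp only [star_trivial, dotProduct, Matrix.mulVec, mul_add, add_mul,
      Finset.sum_add_distrib, mul_ite, ite_mul, mul_zero, zero_mul, mul_one, one_mul,
      Finset.sum_ite_eq', Finset.mem_univ, if_true] at h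
    rw [hsym] at h
    nlinarith [h]
  have hd := discrim_le_zero key
  have hii : 0 ≤ X i i := by have := key 0; simpa using this
  have hjj : 0 ≤ X j j := by
    have h := hX.dotProduct_mulVec_nonneg (fun k => if k = j then (1:ℝ) else 0)
    simp only [star_trivial, dotProduct, Matrix.mulVec, mul_ite, ite_mul,
      mul_zero, zero_mul, mul_one, one_mul, Finset.sum_ite_eq', Finset.mem_univ,
      if_true] at h
    exact h
  rw [discrim] at hd
  have hsq : X i j ^ 2 ≤ X i i * X j j := by nlinarith
  calc X i j ≤ |X i j| := le_abs_self _
  _ = Real.sqrt (X i j ^ 2) := (Real.sqrt_sq_eq_abs _).symm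
  _ ≤ Real.sqrt (X i i * X j j) := Real.sqrt_le_sqrt hsq
  _ = Real.sqrt (X i i) * Real.sqrt (X j j) := Real.sqrt_mul hii _

/-- For nonnegative vectors `p, q ∈ ℝ₊ⁿ`, the fidelity
`F(p,q) = (∑ i, √(p i) √(q i))²` equals the optimal value of the SDP:
maximize `⟨X, √p √pᵀ⟩` subject to `diag X = q`, `X ⪰ 0`. -/
theorem fidelity_sdp (n : ℕ) (p q : Fin n → ℝ)
    (hp : ∀ i, 0 ≤ p i) (hq : ∀ i, 0 ≤ q i) :
    IsGreatest
      {v : ℝ | ∃ X : Matrix (Fin n) (Fin n) ℝ, X.PosSemidef ∧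
        (∀ i, X i i = q i) ∧
        v = ∑ i, ∑ j, X i j * (Real.sqrt (p i) * Real.sqrt (p j))}
      ((∑ i, Real.sqrt (p i) * Real.sqrt (q i)) ^ 2) := by
  constructor
  · refine ⟨fun i j => Real.sqrt (q i) * Real.sqrt (q j),
      Matrix.PosSemidef.of_dotProduct_mulVec_nonneg ?_ ?_, ?_, ?_⟩
    · refine Matrix.IsHermitian.ext fun i j => ?_; simp [mul_comm]
    · intro x
      have hcalc : dotProduct (star x)
          (Matrix.mulVec (fun i j => Real.sqrt (q i) * Real.sqrt (q j)) x)
          = (∑ i, Real.sqrt (q i) * x i) ^ 2 := by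
        simp only [star_trivial, dotProduct, Matrix.mulVec]
        rw [sq, Finset.sum_mul_sum]
        refine Finset.sum_congr rfl fun i _ => ?_
        simp only [Finset.mul_sum]
        exact Finset.sum_congr rfl fun j _ => by ring
      rw [hcalc]; positivity
    · intro i; exact Real.mul_self_sqrt (hq i)
    · rw [sq, Finset.sum_mul_sum]
      refine Finset.sum_congr rfl fun i _ => ?_
      refine Finset.sum_congr rfl fun j _ => ?_
      ring
  · rintro v ⟨X, hX, hdiag, rfl⟩
    calc ∑ i, ∑ j, X i j * (Real.sqrt (p i) * Real.sqrt (p j))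
        ≤ ∑ i, ∑ j, (Real.sqrt (q i) * Real.sqrt (q j)) *
            (Real.sqrt (p i) * Real.sqrt (p j)) := by
          refine Finset.sum_le_sum fun i _ => Finset.sum_le_sum fun j _ => ?_
          apply mul_le_mul_of_nonneg_right
          · have h := psd_entry_le n X hX i j
            rwa [hdiag i, hdiag j] at h
          · positivity
      _ = (∑ i, Real.sqrt (p i) * Real.sqrt (q i)) ^ 2 := by
          rw [sq, Finset.sum_mul_sum]
          refine Finset.sum_congr rfl fun i _ => ?_
          refine Finset.sum_congr rfl fun j _ => ?_
          ring
end

section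
/- For any η, τ ≥ 0 and probability vectors p, q ∈ Prob^n, the largest eigenvalue of η √p √p^T + τ √q √q^T is at least (1/2)(1 + √F(p,q))(η + τ). -/
open Real Finset Matrix

lemma rayleigh_aux {n : ℕ} (A : Matrix (Fin n) (Fin n) ℝ) (hA : A.IsHermitian)
    (v : Fin n → ℝ) (hn : 0 < n) :
    v ⬝ᵥ (A *ᵥ v) ≤ (⨆ k, hA.eigenvalues k) * (v ⬝ᵥ v) := by
  have : Nonempty (Fin n) := Fin.pos_iff_nonempty.mp hn
  set U : Matrix (Fin n) (Fin n) ℝ := (hA.eigenvectorUnitary : Matrix (Fin n) (Fin n) ℝ) with hU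
  set w : Fin n → ℝ := star U *ᵥ v with hw
  have hvU : v ᵥ* U = w := by
    rw [hw, ← Matrix.mulVec_transpose, hU, Matrix.star_eq_conjTranspose,
      Matrix.conjTranspose_eq_transpose_of_trivial]
  have h1 : v ⬝ᵥ (A *ᵥ v) = ∑ i, hA.eigenvalues i * (w i)^2 := by
    conv_lhs => rw [hA.spectral_theorem, Unitary.conjStarAlgAut_apply]
    rw [← Matrix.mulVec_mulVec, ← Matrix.mulVec_mulVec, Matrix.dotProduct_mulVec, hvU]
    simp [dotProduct, Matrix.mulVec_diagonal, RCLike.ofReal_real_eq_id]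
    exact Finset.sum_congr rfl fun i _ => by rw [hw]; ring
  have h2 : v ⬝ᵥ v = ∑ i, (w i)^2 := by
    have hvm : w ᵥ* star U = (U * star U) *ᵥ v := by
      rw [← Matrix.mulVec_transpose, hw, Matrix.mulVec_mulVec,
        Matrix.star_eq_conjTranspose, Matrix.conjTranspose_eq_transpose_of_trivial,
        Matrix.transpose_transpose]
    have : w ⬝ᵥ w = v ⬝ᵥ v := by
      rw [hw, Matrix.dotProduct_mulVec, hvm, hU,
        Unitary.mul_star_self_of_mem hA.eigenvectorUnitary.prop, Matrix.one_mulVec]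
    rw [← this]
    simp [dotProduct, sq]
  rw [h1, h2, Finset.mul_sum]
  apply Finset.sum_le_sum
  intro i _
  exact mul_le_mul_of_nonneg_right (le_ciSup (Set.Finite.bddAbove (Set.finite_range _)) i) (sq_nonneg _)

/-- For `η, τ ≥ 0` and probability vectors `p, q`, the largest
eigenvalue of `η √p √pᵀ + τ √q √qᵀ` is at least
`(1/2)(1 + √F(p,q))(η + τ)`. -/
theorem lambda_max_lower_bound (n : ℕ) (η τ : ℝ) (hη : 0 ≤ η) (hτ : 0 ≤ τ)
    (p q : Fin n → ℝ)
    (hp : ∀ i, 0 ≤ p i) (hp1 : (∑ i, p i) = 1)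
    (hq : ∀ i, 0 ≤ q i) (hq1 : (∑ i, q i) = 1)
    (hM : (η • Matrix.vecMulVec (fun i => Real.sqrt (p i)) (fun i => Real.sqrt (p i))
          + τ • Matrix.vecMulVec (fun i => Real.sqrt (q i)) (fun i => Real.sqrt (q i))).IsHermitian) :
    (1 / 2) * (1 + Real.sqrt ((∑ i, Real.sqrt (p i) * Real.sqrt (q i)) ^ 2)) * (η + τ)
      ≤ ⨆ k, hM.eigenvalues k := by
  have hn : 0 < n := by
    rcases Nat.eq_zero_or_pos n with h | h
    · subst h; simp at hp1
    · exact h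
  set s : ℝ := ∑ i, Real.sqrt (p i) * Real.sqrt (q i) with hs
  have hs0 : 0 ≤ s := Finset.sum_nonneg fun i _ =>
    mul_nonneg (Real.sqrt_nonneg _) (Real.sqrt_nonneg _)
  set v : Fin n → ℝ := fun i => Real.sqrt (p i) + Real.sqrt (q i) with hv
  have hpv : ∑ i, Real.sqrt (p i) * v i = 1 + s := by
    simp only [hv, mul_add, Finset.sum_add_distrib]
    congr 1
    rw [← hp1]
    exact Finset.sum_congr rfl fun i _ => Real.mul_self_sqrt (hp i)
  have hqv : ∑ i, Real.sqrt (q i) * v i = 1 + s := by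
    simp only [hv, mul_add, Finset.sum_add_distrib]
    have e2 : ∑ i, Real.sqrt (q i) * Real.sqrt (q i) = 1 := by
      rw [← hq1]; exact Finset.sum_congr rfl fun i _ => Real.mul_self_sqrt (hq i)
    have e3 : ∑ i, Real.sqrt (q i) * Real.sqrt (p i) = s := by
      rw [hs]; exact Finset.sum_congr rfl fun i _ => mul_comm _ _
    rw [e2, e3, add_comm]
  set M := (η • Matrix.vecMulVec (fun i => Real.sqrt (p i)) (fun i => Real.sqrt (p i))
          + τ • Matrix.vecMulVec (fun i => Real.sqrt (q i)) (fun i => Real.sqrt (q i))) with hMdef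
  have key : v ⬝ᵥ (M *ᵥ v) = (η + τ) * (1 + s) ^ 2 := by
    have hrow : ∀ i, (M *ᵥ v) i
        = η * Real.sqrt (p i) * (1 + s) + τ * Real.sqrt (q i) * (1 + s) := by
      intro i
      simp only [hMdef, Matrix.mulVec, dotProduct, Matrix.add_apply, Matrix.smul_apply,
        Matrix.vecMulVec_apply, smul_eq_mul, add_mul, Finset.sum_add_distrib]
      have h1 : ∑ x, η * (Real.sqrt (p i) * Real.sqrt (p x)) * v x
          = η * Real.sqrt (p i) * (1 + s) := by
        rw [← hpv, Finset.mul_sum]; exact Finset.sum_congr rfl fun j _ => by ring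
      have h2 : ∑ x, τ * (Real.sqrt (q i) * Real.sqrt (q x)) * v x
          = τ * Real.sqrt (q i) * (1 + s) := by
        rw [← hqv, Finset.mul_sum]; exact Finset.sum_congr rfl fun j _ => by ring
      rw [h1, h2]
    have : v ⬝ᵥ (M *ᵥ v) = ∑ i, (η * (1 + s) * (Real.sqrt (p i) * v i)
        + τ * (1 + s) * (Real.sqrt (q i) * v i)) := by
      simp only [dotProduct]
      exact Finset.sum_congr rfl fun i _ => by rw [hrow i]; ring
    rw [this, Finset.sum_add_distrib, ← Finset.mul_sum, ← Finset.mul_sum, hpv, hqv]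
    ring
  have hnorm : v ⬝ᵥ v = 2 * (1 + s) := by
    simp only [dotProduct, hv, add_mul, mul_add, Finset.sum_add_distrib]
    have e1 : ∑ i, Real.sqrt (p i) * Real.sqrt (p i) = 1 := by
      rw [← hp1]; exact Finset.sum_congr rfl fun i _ => Real.mul_self_sqrt (hp i)
    have e2 : ∑ i, Real.sqrt (q i) * Real.sqrt (q i) = 1 := by
      rw [← hq1]; exact Finset.sum_congr rfl fun i _ => Real.mul_self_sqrt (hq i)
    have e3 : ∑ i, Real.sqrt (q i) * Real.sqrt (p i) = s := by
      rw [hs]; exact Finset.sum_congr rfl fun i _ => mul_comm _ _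
    rw [e1, e2, e3, ← hs]
    ring
  have hray := rayleigh_aux M hM v hn
  rw [key, hnorm] at hray
  rw [Real.sqrt_sq hs0]
  have h1s : (0:ℝ) < 1 + s := by linarith
  have : (η + τ) * (1 + s) ≤ (⨆ k, hM.eigenvalues k) * 2 := by
    apply le_of_mul_le_mul_right _ h1s
    calc (η + τ) * (1 + s) * (1 + s) = (η + τ) * (1 + s) ^ 2 := by ring
    _ ≤ (⨆ k, hM.eigenvalues k) * (2 * (1 + s)) := hray
    _ = (⨆ k, hM.eigenvalues k) * 2 * (1 + s) := by ring
  linarith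
end

section
/- Let A be a finite set, p = ∑_{x∈A} p_x e_x ⊗ e_x ∈ Prob^{A×A} a probability vector supported on the diagonal, and σ ∈ S_+^A a density matrix. Then max{ ⟨√p √p^T, ρ⟩ : ρ ∈ S_+^{A×A}, Tr_A(ρ) = σ } ≤ max{ ⟨√p √p^T, ρ⟩ : ρ ∈ S_+^{A×A}, Tr_A(ρ) = Diag(σ) }, and the right-hand maximum equals F(p, q), where q = ∑_{x∈A} σ_{xx} e_x ⊗ e_x, attained at ρ = √q √q^T. -/
open Real Finset

/-- Partial trace over the first factor of `A × A`, for real matrices. -/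
noncomputable def ptrFst {A : Type*} [Fintype A]
    (ρ : Matrix (A × A) (A × A) ℝ) : Matrix A A ℝ :=
  Matrix.of fun x y => ∑ a : A, ρ (a, x) (a, y)

-- helper lemmas
lemma psd_diag_nonneg {n : Type*} [Fintype n] [DecidableEq n]
    {ρ : Matrix n n ℝ} (h : ρ.PosSemidef) (i : n) : 0 ≤ ρ i i := by
  simpa using h.dotProduct_mulVec_nonneg (Pi.single i 1)

lemma psd_entry_le_s8 {n : Type*} [Fintype n] [DecidableEq n]
    {ρ : Matrix n n ℝ} (h : ρ.PosSemidef) (i j : n) :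
    ρ i j ≤ Real.sqrt (ρ i i) * Real.sqrt (ρ j j) := by
  have ha : 0 ≤ ρ i i := psd_diag_nonneg h i
  have hb : 0 ≤ ρ j j := psd_diag_nonneg h j
  rcases eq_or_ne i j with rfl | hij
  · rw [Real.mul_self_sqrt ha]
  have hsym : ρ j i = ρ i j := by
    have h1 := h.1
    have := congrFun (congrFun h1 j) i
    simpa [Matrix.conjTranspose_apply] using this.symm
  have Q : ∀ t s : ℝ, 0 ≤ ρ i i * t^2 + 2 * ρ i j * t * s + ρ j j * s^2 := by
    intro t s
    have h2 := h.dotProduct_mulVec_nonneg (t • (Pi.single i 1 : n → ℝ) + s • (Pi.single j 1 : n → ℝ))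
    simp only [star_trivial, Matrix.mulVec_add, Matrix.mulVec_smul,
      Matrix.mulVec_single, dotProduct_add, add_dotProduct,
      smul_dotProduct, dotProduct_smul, single_dotProduct,
      smul_eq_mul, mul_one, Pi.add_apply, Pi.smul_apply, Pi.single_apply,
      Matrix.col_apply, MulOpposite.op_one, one_smul, one_mul] at h2
    rw [hsym] at h2
    nlinarith [h2]
  rcases eq_or_lt_of_le ha with hz | hpos
  · rcases eq_or_ne (ρ i j) 0 with hc | hc
    · rw [hc]; positivity
    · have h3 := Q (-(ρ j j + 1)/(2 * ρ i j)) 1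
      rw [← hz] at h3
      field_simp at h3
      rw [le_div_iff₀ (by positivity)] at h3
      nlinarith [h3, sq_pos_of_ne_zero hc]
  · have h4 := Q (ρ i j) (-(ρ i i))
    have hcs : (ρ i j)^2 ≤ ρ i i * ρ j j := by nlinarith
    calc ρ i j ≤ |ρ i j| := le_abs_self _
      _ = Real.sqrt ((ρ i j)^2) := (Real.sqrt_sq_eq_abs _).symm
      _ ≤ Real.sqrt (ρ i i * ρ j j) := Real.sqrt_le_sqrt hcs
      _ = Real.sqrt (ρ i i) * Real.sqrt (ρ j j) := Real.sqrt_mul ha _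

lemma vmv_psd {n : Type*} [Fintype n] (v : n → ℝ) :
    (Matrix.vecMulVec v v).PosSemidef := by
  refine Matrix.PosSemidef.of_dotProduct_mulVec_nonneg ?_ ?_
  · ext i j
    simp [Matrix.conjTranspose_apply, Matrix.vecMulVec_apply, mul_comm]
  · intro x
    have key : dotProduct (star x) ((Matrix.vecMulVec v v).mulVec x)
        = (∑ i, v i * x i) * (∑ i, v i * x i) := by
      simp only [star_trivial, dotProduct, Matrix.mulVec, Matrix.vecMulVec_apply]
      rw [Finset.sum_mul_sum]
      refine Finset.sum_congr rfl fun i _ => ?_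
      rw [Finset.mul_sum]
      exact Finset.sum_congr rfl fun j _ => by ring
    rw [key]
    exact mul_self_nonneg _

lemma aux_bound {A : Type*} [Fintype A] [DecidableEq A]
    (w : A → ℝ) (hw : ∀ x, 0 ≤ w x)
    (σ : Matrix A A ℝ) (p q : A × A → ℝ)
    (hpdef : p = fun z => if z.1 = z.2 then w z.1 else 0)
    (hqdef : q = fun z => if z.1 = z.2 then σ z.1 z.1 else 0)
    (ρ : Matrix (A × A) (A × A) ℝ) (hρ : ρ.PosSemidef)
    (hd : ∀ x : A, ∑ a, ρ (a, x) (a, x) = σ x x) :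
    (∑ z, ∑ z', Real.sqrt (p z) * Real.sqrt (p z') * ρ z z')
      ≤ (∑ z, Real.sqrt (p z) * Real.sqrt (q z)) ^ 2 := by
  have hdiag : ∀ z, 0 ≤ ρ z z := fun z => psd_diag_nonneg hρ z
  have hσd : ∀ x, 0 ≤ σ x x := by
    intro x
    rw [← hd x]
    exact Finset.sum_nonneg fun a _ => hdiag _
  set T : ℝ := ∑ z, Real.sqrt (p z) * Real.sqrt (ρ z z) with hT
  have hT0 : 0 ≤ T := Finset.sum_nonneg fun z _ => by positivity
  have step1 : (∑ z, ∑ z', Real.sqrt (p z) * Real.sqrt (p z') * ρ z z') ≤ T * T := by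
    rw [hT, Finset.sum_mul_sum]
    refine Finset.sum_le_sum fun z _ => Finset.sum_le_sum fun z' _ => ?_
    have h1 := psd_entry_le_s8 hρ z z'
    have h2 : (0:ℝ) ≤ Real.sqrt (p z) * Real.sqrt (p z') := by positivity
    nlinarith [h1, h2, Real.sqrt_nonneg (ρ z z), Real.sqrt_nonneg (ρ z' z')]
  have hTle : T ≤ ∑ z, Real.sqrt (p z) * Real.sqrt (q z) := by
    refine Finset.sum_le_sum ?_
    rintro ⟨a, b⟩ _
    rcases eq_or_ne a b with rfl | hz
    · have hle : ρ (a, a) (a, a) ≤ σ a a := by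
        rw [← hd a]
        exact Finset.single_le_sum (fun c (_ : c ∈ Finset.univ) => hdiag ((c, a)))
          (Finset.mem_univ a)
      have hs : Real.sqrt (ρ (a, a) (a, a)) ≤ Real.sqrt (q (a, a)) := by
        rw [hqdef]
        exact Real.sqrt_le_sqrt (by simpa using hle)
      exact mul_le_mul_of_nonneg_left hs (Real.sqrt_nonneg _)
    · rw [hpdef]; simp [hz]
  have hS0 : 0 ≤ ∑ z, Real.sqrt (p z) * Real.sqrt (q z) :=
    Finset.sum_nonneg fun z _ => by positivity
  calc (∑ z, ∑ z', Real.sqrt (p z) * Real.sqrt (p z') * ρ z z') ≤ T * T := step1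
    _ ≤ (∑ z, Real.sqrt (p z) * Real.sqrt (q z)) ^ 2 := by
        rw [pow_two]; exact mul_le_mul hTle hTle hT0 hS0

/-- For a probability vector `p` supported on the diagonal of
`A × A` and a density matrix `σ`, the SDP value with constraint `Tr_A ρ = σ`
is at most the one with constraint `Tr_A ρ = Diag(σ)`, and the latter equals
`F(p,q)` (with `q` the diagonal of `σ`, placed on the diagonal of `A × A`),
attained at `ρ = √q √qᵀ`. -/
theorem diag_relaxation (A : Type*) [Fintype A] [DecidableEq A]
    (w : A → ℝ) (hw : ∀ x, 0 ≤ w x) (hw1 : (∑ x, w x) = 1)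
    (σ : Matrix A A ℝ) (hσ : σ.PosSemidef) (hσ1 : σ.trace = 1)
    (p q : A × A → ℝ)
    (hpdef : p = fun z => if z.1 = z.2 then w z.1 else 0)
    (hqdef : q = fun z => if z.1 = z.2 then σ z.1 z.1 else 0) :
    (∀ ρ : Matrix (A × A) (A × A) ℝ, ρ.PosSemidef → ptrFst ρ = σ →
        (∑ z, ∑ z', Real.sqrt (p z) * Real.sqrt (p z') * ρ z z')
          ≤ (∑ z, Real.sqrt (p z) * Real.sqrt (q z)) ^ 2)
    ∧ IsGreatest
        {v : ℝ | ∃ ρ : Matrix (A × A) (A × A) ℝ, ρ.PosSemidef ∧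
          ptrFst ρ = Matrix.diagonal (fun x => σ x x) ∧
          v = ∑ z, ∑ z', Real.sqrt (p z) * Real.sqrt (p z') * ρ z z'}
        ((∑ z, Real.sqrt (p z) * Real.sqrt (q z)) ^ 2)
    ∧ ((Matrix.vecMulVec (fun z => Real.sqrt (q z)) (fun z => Real.sqrt (q z))).PosSemidef
        ∧ ptrFst (Matrix.vecMulVec (fun z => Real.sqrt (q z)) (fun z => Real.sqrt (q z)))
            = Matrix.diagonal (fun x => σ x x)
        ∧ (∑ z, ∑ z', Real.sqrt (p z) * Real.sqrt (p z')
              * Matrix.vecMulVec (fun z => Real.sqrt (q z)) (fun z => Real.sqrt (q z)) z z')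
            = (∑ z, Real.sqrt (p z) * Real.sqrt (q z)) ^ 2) := by
  
  have hσd : ∀ x, 0 ≤ σ x x := fun x => psd_diag_nonneg hσ x
  have hqs : ∀ z : A × A, Real.sqrt (q z)
      = if z.1 = z.2 then Real.sqrt (σ z.1 z.1) else 0 := by
    intro z; rw [hqdef]; dsimp only; split_ifs with h <;> simp [h]
  have h3a : (Matrix.vecMulVec (fun z => Real.sqrt (q z))
      (fun z => Real.sqrt (q z))).PosSemidef := vmv_psd _
  have h3b : ptrFst (Matrix.vecMulVec (fun z => Real.sqrt (q z)) (fun z => Real.sqrt (q z)))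
      = Matrix.diagonal (fun x => σ x x) := by
    ext x y
    simp only [ptrFst, Matrix.of_apply, Matrix.vecMulVec_apply, hqs]
    rcases eq_or_ne x y with rfl | hxy
    · simp [Matrix.diagonal_apply_eq, Finset.sum_ite_eq, Real.mul_self_sqrt (hσd x)]
    · rw [Matrix.diagonal_apply_ne _ hxy]
      apply Finset.sum_eq_zero
      intro a _
      rcases eq_or_ne a x with rfl | h
      · simp [hxy]
      · simp [h]
  have h3c : (∑ z, ∑ z', Real.sqrt (p z) * Real.sqrt (p z')
        * Matrix.vecMulVec (fun z => Real.sqrt (q z)) (fun z => Real.sqrt (q z)) z z')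
      = (∑ z, Real.sqrt (p z) * Real.sqrt (q z)) ^ 2 := by
    rw [pow_two, Finset.sum_mul_sum]
    refine Finset.sum_congr rfl fun z _ => Finset.sum_congr rfl fun z' _ => ?_
    simp only [Matrix.vecMulVec_apply]
    ring
  refine ⟨?_, ⟨⟨_, h3a, h3b, h3c.symm⟩, ?_⟩, h3a, h3b, h3c⟩
  · intro ρ hρ hptr
    refine aux_bound w hw σ p q hpdef hqdef ρ hρ fun x => ?_
    have := congrFun (congrFun hptr x) x
    simpa [ptrFst] using this
  · rintro v ⟨ρ, hρ, hptr, rfl⟩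
    refine aux_bound w hw σ p q hpdef hqdef ρ hρ fun x => ?_
    have := congrFun (congrFun hptr x) x
    simpa [ptrFst, Matrix.diagonal_apply_eq] using this
end

section
/- For any integer N ≥ 1 and any probability vector γ ∈ Prob^D, there exists a probability vector γ′ ∈ Prob^D all of whose entries are integer multiples of 1/N such that the unit vectors ξ = ∑_i √(γ_i) e_i and ξ′ = ∑_i √(γ′_i) e_i satisfy ξ·ξ′ ≥ 1 − D/(2N). -/
open Real Finset

/-- For any `N ≥ 1` and probability vector `γ ∈ Prob^D`, there is
a probability vector `γ'` whose entries are integer multiples of `1/N` such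
that `∑ i, √(γ i) √(γ' i) ≥ 1 − D/(2N)`. -/
theorem mesh_approximation (D N : ℕ) (hN : 1 ≤ N)
    (γ : Fin D → ℝ) (hγ : ∀ i, 0 ≤ γ i) (hγ1 : (∑ i, γ i) = 1) :
    ∃ γ' : Fin D → ℝ, (∀ i, 0 ≤ γ' i) ∧ (∑ i, γ' i) = 1 ∧
      (∀ i, ∃ k : ℕ, γ' i = (k : ℝ) / N) ∧
      1 - (D : ℝ) / (2 * N) ≤ ∑ i, Real.sqrt (γ i) * Real.sqrt (γ' i) := by
  have hD : 1 ≤ D := by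
    by_contra h
    have : D = 0 := by omega
    subst this
    simp at hγ1
  have hNe : Nonempty (Fin D) := ⟨⟨0, hD⟩⟩
  have hN0 : (0:ℝ) < N := by exact_mod_cast hN
  set k : Fin D → ℕ := fun i => ⌊(N:ℝ) * γ i⌋₊ with hk
  have hkle : ∀ i, (k i : ℝ) ≤ N * γ i := fun i => Nat.floor_le (mul_nonneg (Nat.cast_nonneg N) (hγ i))
  have hklt : ∀ i, (N:ℝ) * γ i < k i + 1 := fun i => Nat.lt_floor_add_one _
  set S := ∑ i, k i with hS
  have hSsum : (N:ℝ) = ∑ i, (N:ℝ) * γ i := by rw [← Finset.mul_sum, hγ1, mul_one]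
  have hSN : S ≤ N := by
    have h1 : (S:ℝ) ≤ N := by
      rw [hSsum, hS]
      push_cast
      exact Finset.sum_le_sum fun i _ => hkle i
    exact_mod_cast h1
  have hmD : N - S ≤ D := by
    have h2 : (N:ℝ) < S + D := by
      calc (N:ℝ) = ∑ i, (N:ℝ) * γ i := hSsum
        _ < ∑ i, ((k i:ℝ) + 1) := Finset.sum_lt_sum_of_nonempty Finset.univ_nonempty
            (fun i _ => hklt i)
        _ = S + D := by
            rw [Finset.sum_add_distrib, hS]
            push_cast
            simp [Finset.card_univ]
    have : N < S + D := by exact_mod_cast h2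
    omega
  set m := N - S with hm
  refine ⟨fun i => ((k i : ℝ) + if (i:ℕ) < m then 1 else 0) / N, ?_, ?_, ?_, ?_⟩
  · intro i
    have : (0:ℝ) ≤ (k i : ℝ) + if (i:ℕ) < m then 1 else 0 := by positivity
    positivity
  · have hcount : ∑ i : Fin D, (if (i:ℕ) < m then (1:ℝ) else 0) = m := by
      rw [Fin.sum_univ_eq_sum_range (fun i => if i < m then (1:ℝ) else 0)]
      have hc : ∀ x ∈ Finset.range D, (if x < m then (1:ℝ) else 0)
          = if x ∈ Finset.range m then (1:ℝ) else 0 := by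
        intro x _; simp
      rw [Finset.sum_congr rfl hc, Finset.sum_ite_mem]
      have : Finset.range D ∩ Finset.range m = Finset.range m := by
        ext x; simp; omega
      rw [this, Finset.sum_const, Finset.card_range, nsmul_eq_mul, mul_one]
    rw [← Finset.sum_div, Finset.sum_add_distrib, hcount]
    have : (∑ i, (k i : ℝ)) = S := by rw [hS]; push_cast; ring
    rw [this]
    have : (S:ℝ) + m = N := by
      have : S + m = N := by omega
      exact_mod_cast this
    rw [this]; field_simp
  · intro i
    by_cases h : (i:ℕ) < m
    · exact ⟨k i + 1, by simp only [h, if_true]; push_cast; ring⟩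
    · exact ⟨k i, by simp only [h, if_false]; ring⟩
  · have hmin : ∀ i : Fin D, min (γ i) (((k i : ℝ) + if (i:ℕ) < m then 1 else 0) / N)
        ≤ Real.sqrt (γ i) * Real.sqrt (((k i : ℝ) + if (i:ℕ) < m then 1 else 0) / N) := by
      intro i
      set b := ((k i : ℝ) + if (i:ℕ) < m then 1 else 0) / N with hb
      have hb0 : 0 ≤ b := by
        have : (0:ℝ) ≤ (k i : ℝ) + if (i:ℕ) < m then 1 else 0 := by positivity
        positivity
      rcases le_total (γ i) b with h | h
      · rw [min_eq_left h]
        calc γ i = Real.sqrt (γ i) * Real.sqrt (γ i) := (Real.mul_self_sqrt (hγ i)).symm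
          _ ≤ Real.sqrt (γ i) * Real.sqrt b :=
            mul_le_mul_of_nonneg_left (Real.sqrt_le_sqrt h) (Real.sqrt_nonneg _)
      · rw [min_eq_right h]
        calc b = Real.sqrt b * Real.sqrt b := (Real.mul_self_sqrt hb0).symm
          _ ≤ Real.sqrt (γ i) * Real.sqrt b :=
            mul_le_mul_of_nonneg_right (Real.sqrt_le_sqrt h) (Real.sqrt_nonneg _)
    have habs : ∀ i : Fin D, |γ i - ((k i : ℝ) + if (i:ℕ) < m then 1 else 0) / N| ≤ 1 / N := by
      intro i
      have h1 := hkle i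
      have h2 := hklt i
      have hlo : (k i : ℝ)/N ≤ γ i := by rw [div_le_iff₀ hN0]; linarith
      have hhi : γ i ≤ ((k i : ℝ)+1)/N := by rw [le_div_iff₀ hN0]; linarith
      have hq : ((k i : ℝ)+1)/N = (k i : ℝ)/N + 1/N := by ring
      have hq0 : ((k i : ℝ)+0)/N = (k i : ℝ)/N := by ring
      have hN1 : (0:ℝ) < 1/N := by positivity
      rw [abs_le]
      constructor <;> split <;> linarith
    have hsum2 : ∑ i, (((k i : ℝ) + if (i:ℕ) < m then 1 else 0) / N) = 1 := by
      -- reprove as above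
      have hcount : ∑ i : Fin D, (if (i:ℕ) < m then (1:ℝ) else 0) = m := by
        rw [Fin.sum_univ_eq_sum_range (fun i => if i < m then (1:ℝ) else 0)]
        have hc : ∀ x ∈ Finset.range D, (if x < m then (1:ℝ) else 0)
            = if x ∈ Finset.range m then (1:ℝ) else 0 := by
          intro x _; simp
        rw [Finset.sum_congr rfl hc, Finset.sum_ite_mem]
        have : Finset.range D ∩ Finset.range m = Finset.range m := by
          ext x; simp; omega
        rw [this, Finset.sum_const, Finset.card_range, nsmul_eq_mul, mul_one]
      rw [← Finset.sum_div, Finset.sum_add_distrib, hcount]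
      have h3 : (∑ i, (k i : ℝ)) = S := by rw [hS]; push_cast; ring
      rw [h3]
      have h4 : (S:ℝ) + m = N := by
        have : S + m = N := by omega
        exact_mod_cast this
      rw [h4]; field_simp
    have key : 1 - (D:ℝ) / (2 * N) ≤
        ∑ i, min (γ i) (((k i : ℝ) + if (i:ℕ) < m then 1 else 0) / N) := by
      have hmeq : ∀ i : Fin D, min (γ i) (((k i : ℝ) + if (i:ℕ) < m then 1 else 0) / N)
          = (γ i + ((k i : ℝ) + if (i:ℕ) < m then 1 else 0) / N
             - |γ i - ((k i : ℝ) + if (i:ℕ) < m then 1 else 0) / N|) / 2 := by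
        intro i
        rcases le_total (γ i) (((k i : ℝ) + if (i:ℕ) < m then 1 else 0) / N) with h | h
        · rw [min_eq_left h, abs_of_nonpos (by linarith)]; ring
        · rw [min_eq_right h, abs_of_nonneg (by linarith)]; ring
      rw [Finset.sum_congr rfl (fun i _ => hmeq i)]
      rw [← Finset.sum_div, Finset.sum_sub_distrib, Finset.sum_add_distrib, hγ1, hsum2]
      have hT : ∑ i, |γ i - ((k i : ℝ) + if (i:ℕ) < m then 1 else 0) / N| ≤ D / N := by
        calc ∑ i, |γ i - ((k i : ℝ) + if (i:ℕ) < m then 1 else 0) / N|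
            ≤ ∑ _i : Fin D, (1:ℝ) / N := Finset.sum_le_sum fun i _ => habs i
          _ = D / N := by simp [Finset.card_univ]; ring
      have hr : (D:ℝ) / (2 * N) = ((D:ℝ)/N)/2 := by ring
      linarith
    calc 1 - (D:ℝ) / (2 * N) ≤ _ := key
      _ ≤ _ := Finset.sum_le_sum fun i _ => hmin i
end

section
/- For probability vectors p, q ∈ Prob² on a 2-element set, 1 ≤ Δ(p,q) + F(p,q), where F(p,q) = (√(p₁q₁)+√(p₂q₂))² and Δ(p,q) = (1/2)(|p₁−q₁|+|p₂−q₂|). -/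
open Real Finset

/-- Auxiliary one-sided version: assumes `b ≤ a`. -/
lemma fvdg_aux (a b : ℝ) (ha0 : 0 ≤ a) (hb0 : 0 ≤ b) (ha1 : a ≤ 1) (hb1 : b ≤ 1)
    (hab : b ≤ a) :
    1 ≤ (a - b) + (Real.sqrt a * Real.sqrt b + Real.sqrt (1 - a) * Real.sqrt (1 - b)) ^ 2 := by
  set sa := Real.sqrt a
  set sb := Real.sqrt b
  set sc := Real.sqrt (1 - a)
  set sd := Real.sqrt (1 - b)
  have hsa : sa ^ 2 = a := Real.sq_sqrt ha0
  have hsb : sb ^ 2 = b := Real.sq_sqrt hb0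
  have hsc : sc ^ 2 = 1 - a := Real.sq_sqrt (by linarith)
  have hsd : sd ^ 2 = 1 - b := Real.sq_sqrt (by linarith)
  have h1 : sb ≤ sa := Real.sqrt_le_sqrt hab
  have h2 : sc ≤ sd := Real.sqrt_le_sqrt (by linarith)
  have hsa0 : 0 ≤ sa := Real.sqrt_nonneg _
  have hsb0 : 0 ≤ sb := Real.sqrt_nonneg _
  have hsc0 : 0 ≤ sc := Real.sqrt_nonneg _
  have hsd0 : 0 ≤ sd := Real.sqrt_nonneg _
  have key : sb * sb * (sc * sc) ≤ sa * sb * (sc * sd) := by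
    have := mul_le_mul (mul_le_mul_of_nonneg_right h1 hsb0)
      (mul_le_mul_of_nonneg_left h2 hsc0) (mul_nonneg hsc0 hsc0)
      (mul_nonneg hsa0 hsb0)
    linarith
  nlinarith [key, hsa, hsb, hsc, hsd]

/-- Strengthened Fuchs–van de Graaf inequality in dimension 2:
for probability vectors `p, q` on a 2-element set, `1 ≤ Δ(p,q) + F(p,q)`. -/
theorem fuchs_van_de_graaf_qubit (p q : Fin 2 → ℝ)
    (hp : ∀ i, 0 ≤ p i) (hp1 : (∑ i, p i) = 1)
    (hq : ∀ i, 0 ≤ q i) (hq1 : (∑ i, q i) = 1) :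
    1 ≤ (1 / 2) * (∑ i, |p i - q i|)
        + (∑ i, Real.sqrt (p i) * Real.sqrt (q i)) ^ 2 := by
  simp only [Fin.sum_univ_two] at *
  have hp0 := hp 0; have hp1' := hp 1; have hq0 := hq 0; have hq1' := hq 1
  have e1 : p 1 = 1 - p 0 := by linarith
  have e2 : q 1 = 1 - q 0 := by linarith
  rw [e1, e2]
  rcases le_total (q 0) (p 0) with h | h
  · have := fvdg_aux (p 0) (q 0) hp0 hq0 (by linarith) (by linarith) h
    have habs1 : |p 0 - q 0| = p 0 - q 0 := abs_of_nonneg (by linarith)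
    have habs2 : |1 - p 0 - (1 - q 0)| = p 0 - q 0 := by
      rw [abs_sub_comm]; rw [abs_of_nonneg (by linarith)]; ring
    rw [habs1, habs2]; linarith
  · have := fvdg_aux (q 0) (p 0) hq0 hp0 (by linarith) (by linarith) h
    have habs1 : |p 0 - q 0| = q 0 - p 0 := by
      rw [abs_sub_comm]; exact abs_of_nonneg (by linarith)
    have habs2 : |1 - p 0 - (1 - q 0)| = q 0 - p 0 := by
      rw [abs_of_nonneg (by linarith)]; ring
    rw [habs1, habs2]
    have comm : Real.sqrt (p 0) * Real.sqrt (q 0) + Real.sqrt (1 - p 0) * Real.sqrt (1 - q 0)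
        = Real.sqrt (q 0) * Real.sqrt (p 0) + Real.sqrt (1 - q 0) * Real.sqrt (1 - p 0) := by ring
    rw [comm]; linarith
end

section
/- Suppose real numbers P_A, P_B ∈ [1/2, 1] satisfy: (i) there exist probability vectors β₀, β₁ ∈ Prob² with P_B ≥ 1/2 + (1/2)√F(β₀,β₁), (ii) there exist probability vectors α₀, α₁ ∈ Prob² with P_B ≥ 1/2 + (1/2)Δ(α₀,α₁), and (iii) P_A ≥ (1/2 + (1/2)√F(α₀,α₁))(1/2 + (1/2)Δ(β₀,β₁)). Then 4 P_A ≥ (1 + √(2 − 2 P_B)) (1 + 4 P_B (1 − P_B)), and consequently max{P_A, P_B} ≥ 0.7487. -/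
set_option maxHeartbeats 800000

open Real Finset

lemma fvdg2_aux (a b : ℝ) (hb0 : 0 ≤ b) (ha1 : a ≤ 1) (hba : b ≤ a) :
    1 ≤ (Real.sqrt a * Real.sqrt b + Real.sqrt (1-a) * Real.sqrt (1-b)) ^ 2 + (a - b) := by
  have ha0 : 0 ≤ a := le_trans hb0 hba
  have hb1 : b ≤ 1 := le_trans hba ha1
  have s1 : Real.sqrt b ≤ Real.sqrt a := Real.sqrt_le_sqrt hba
  have s2 : Real.sqrt (1-a) ≤ Real.sqrt (1-b) := Real.sqrt_le_sqrt (by linarith)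
  have q1 : Real.sqrt a ^ 2 = a := Real.sq_sqrt ha0
  have q2 : Real.sqrt b ^ 2 = b := Real.sq_sqrt hb0
  have q3 : Real.sqrt (1-a) ^ 2 = 1-a := Real.sq_sqrt (by linarith)
  have q4 : Real.sqrt (1-b) ^ 2 = 1-b := Real.sq_sqrt (by linarith)
  have key : Real.sqrt b * Real.sqrt (1-a) ≤ Real.sqrt a * Real.sqrt (1-b) :=
    mul_le_mul s1 s2 (Real.sqrt_nonneg _) (Real.sqrt_nonneg _)
  nlinarith [mul_nonneg (mul_nonneg (Real.sqrt_nonneg b) (Real.sqrt_nonneg (1-a)))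
      (sub_nonneg.2 key)]

lemma fvdg2 (a b : ℝ) (ha0 : 0 ≤ a) (ha1 : a ≤ 1) (hb0 : 0 ≤ b) (hb1 : b ≤ 1) :
    1 ≤ (Real.sqrt a * Real.sqrt b + Real.sqrt (1-a) * Real.sqrt (1-b)) ^ 2 + |a - b| := by
  rcases le_total b a with h | h
  · rw [abs_of_nonneg (by linarith)]
    exact fvdg2_aux a b hb0 ha1 h
  · rw [abs_of_nonpos (by linarith)]
    have := fvdg2_aux b a ha0 hb1 h
    nlinarith [this]

lemma num_hs (PB : ℝ) (h : PB ≤ 0.7487) : (0.70894 : ℝ) ≤ Real.sqrt (2 - 2 * PB) := by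
  have h' : ((0.70894 : ℝ)) ^ 2 ≤ 2 - 2 * PB := by nlinarith
  have := Real.sqrt_le_sqrt h'
  rwa [Real.sqrt_sq (by norm_num)] at this

lemma num_ht (PB : ℝ) (h1 : 1 / 2 ≤ PB) (h : PB ≤ 0.7487) :
    (0.75259324 : ℝ) ≤ 4 * PB * (1 - PB) := by
  nlinarith [mul_nonneg (sub_nonneg.2 h) (show (0:ℝ) ≤ PB - 0.2513 by linarith)]

lemma num_final (PA s t : ℝ) (hs : (0.70894 : ℝ) ≤ s) (ht : (0.75259324 : ℝ) ≤ t)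
    (hC1 : (1 + s) * (1 + t) ≤ 4 * PA) : (0.7487 : ℝ) ≤ PA := by
  nlinarith [mul_le_mul hs ht (by norm_num) (by linarith : (0:ℝ) ≤ s)]

/-- Lower bound for four-round qubit protocols. If
`P_A, P_B ∈ [1/2, 1]` satisfy the three cheating-probability lower bounds with
two-dimensional probability vectors `α₀, α₁, β₀, β₁`, then
`4 P_A ≥ (1 + √(2 − 2 P_B))(1 + 4 P_B (1 − P_B))`, and consequently
`max{P_A, P_B} ≥ 0.7487`. -/
theorem four_round_qubit_bound (PA PB : ℝ)
    (hPA : PA ∈ Set.Icc (1 / 2 : ℝ) 1) (hPB : PB ∈ Set.Icc (1 / 2 : ℝ) 1)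
    (β₀ β₁ α₀ α₁ : Fin 2 → ℝ)
    (hβ₀ : ∀ i, 0 ≤ β₀ i) (hβ₀1 : (∑ i, β₀ i) = 1)
    (hβ₁ : ∀ i, 0 ≤ β₁ i) (hβ₁1 : (∑ i, β₁ i) = 1)
    (hα₀ : ∀ i, 0 ≤ α₀ i) (hα₀1 : (∑ i, α₀ i) = 1)
    (hα₁ : ∀ i, 0 ≤ α₁ i) (hα₁1 : (∑ i, α₁ i) = 1)
    (h1 : 1 / 2 + (1 / 2) * Real.sqrt ((∑ i, Real.sqrt (β₀ i) * Real.sqrt (β₁ i)) ^ 2) ≤ PB)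
    (h2 : 1 / 2 + (1 / 2) * ((1 / 2) * ∑ i, |α₀ i - α₁ i|) ≤ PB)
    (h3 : (1 / 2 + (1 / 2) * Real.sqrt ((∑ i, Real.sqrt (α₀ i) * Real.sqrt (α₁ i)) ^ 2))
            * (1 / 2 + (1 / 2) * ((1 / 2) * ∑ i, |β₀ i - β₁ i|)) ≤ PA) :
    (1 + Real.sqrt (2 - 2 * PB)) * (1 + 4 * PB * (1 - PB)) ≤ 4 * PA
    ∧ (0.7487 : ℝ) ≤ max PA PB := by
  obtain ⟨hPA1, hPA2⟩ := hPA
  obtain ⟨hPB1, hPB2⟩ := hPB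
  simp only [Fin.sum_univ_two] at h1 h2 h3 hβ₀1 hβ₁1 hα₀1 hα₁1
  -- rewrite second components
  have eβ₀ : β₀ 1 = 1 - β₀ 0 := by linarith
  have eβ₁ : β₁ 1 = 1 - β₁ 0 := by linarith
  have eα₀ : α₀ 1 = 1 - α₀ 0 := by linarith
  have eα₁ : α₁ 1 = 1 - α₁ 0 := by linarith
  have bβ₀ : β₀ 0 ≤ 1 := by have := hβ₀ 1; linarith
  have bβ₁ : β₁ 0 ≤ 1 := by have := hβ₁ 1; linarith
  have bα₀ : α₀ 0 ≤ 1 := by have := hα₀ 1; linarith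
  have bα₁ : α₁ 0 ≤ 1 := by have := hα₁ 1; linarith
  rw [eβ₀, eβ₁] at h1 h3
  rw [eα₀, eα₁] at h2 h3
  set Sβ := Real.sqrt (β₀ 0) * Real.sqrt (β₁ 0) +
      Real.sqrt (1 - β₀ 0) * Real.sqrt (1 - β₁ 0) with hSβdef
  set Sα := Real.sqrt (α₀ 0) * Real.sqrt (α₁ 0) +
      Real.sqrt (1 - α₀ 0) * Real.sqrt (1 - α₁ 0) with hSαdef
  have hSβ0 : 0 ≤ Sβ := by positivity
  have hSα0 : 0 ≤ Sα := by positivity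
  rw [Real.sqrt_sq hSβ0] at h1
  rw [Real.sqrt_sq hSα0] at h3
  -- total variation simplifications
  have hΔβ : |β₀ 0 - β₁ 0| + |1 - β₀ 0 - (1 - β₁ 0)| = 2 * |β₀ 0 - β₁ 0| := by
    rw [show (1 - β₀ 0 - (1 - β₁ 0)) = -(β₀ 0 - β₁ 0) by ring, abs_neg]; ring
  have hΔα : |α₀ 0 - α₁ 0| + |1 - α₀ 0 - (1 - α₁ 0)| = 2 * |α₀ 0 - α₁ 0| := by
    rw [show (1 - α₀ 0 - (1 - α₁ 0)) = -(α₀ 0 - α₁ 0) by ring, abs_neg]; ring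
  rw [hΔα] at h2
  rw [hΔβ] at h3
  set Dβ := |β₀ 0 - β₁ 0| with hDβdef
  set Dα := |α₀ 0 - α₁ 0| with hDαdef
  have hDβ0 : 0 ≤ Dβ := abs_nonneg _
  have hDα0 : 0 ≤ Dα := abs_nonneg _
  -- Fuchs-van de Graaf
  have kβ : 1 ≤ Sβ ^ 2 + Dβ := fvdg2 _ _ (hβ₀ 0) bβ₀ (hβ₁ 0) bβ₁
  have kα : 1 ≤ Sα ^ 2 + Dα := fvdg2 _ _ (hα₀ 0) bα₀ (hα₁ 0) bα₁
  -- From h1 : Sβ ≤ 2 PB - 1, so Dβ ≥ 1 - (2PB-1)^2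
  have hSβle : Sβ ≤ 2 * PB - 1 := by linarith
  have hSβsq : Sβ ^ 2 ≤ (2 * PB - 1) ^ 2 := by nlinarith [hSβ0, hSβle]
  have hDβge : 4 * PB * (1 - PB) ≤ Dβ := by nlinarith [kβ, hSβsq]
  -- From h2 : Dα ≤ 2 PB - 1, so Sα^2 ≥ 2 - 2 PB, Sα ≥ √(2-2PB)
  have hDαle : Dα ≤ 2 * PB - 1 := by linarith
  have hSαsq : 2 - 2 * PB ≤ Sα ^ 2 := by linarith [kα, hDαle]
  have hSαge : Real.sqrt (2 - 2 * PB) ≤ Sα := by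
    have := Real.sqrt_le_sqrt hSαsq
    rwa [Real.sqrt_sq hSα0] at this
  have hs0 : 0 ≤ Real.sqrt (2 - 2 * PB) := Real.sqrt_nonneg _
  -- first conclusion
  have C1 : (1 + Real.sqrt (2 - 2 * PB)) * (1 + 4 * PB * (1 - PB)) ≤ 4 * PA := by
    have step : (1 + Real.sqrt (2 - 2 * PB)) * (1 + 4 * PB * (1 - PB))
        ≤ (1 + Sα) * (1 + Dβ) :=
      mul_le_mul (by linarith) (by linarith) (by nlinarith [hPB1, hPB2]) (by linarith)
    nlinarith [step]
  refine ⟨C1, ?_⟩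
  rcases le_total (0.7487 : ℝ) PB with h | h
  · exact le_trans h (le_max_right _ _)
  · exact le_trans (num_final PA _ _ (num_hs PB h) (num_ht PB hPB1 h) C1) (le_max_left _ _)
end
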